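/- If N ∘ A = p • (A ∘ N), then N is nilpotent. -/

import Mathlib

open Polynomial

/-- Let `K` be a field, `p ∈ K` nonzero with `p^m ≠ 1` for all `m ≥ 1`, `V` a
finite-dimensional `K`-vector space, `A : V → V` an invertible linear map and `N : V → V`
a linear map.  If `N ∘ A = p • (A ∘ N)` then `N` is nilpotent. -/
theorem stmt_8 {K V : Type*} [Field K] [AddCommGroup V] [Module K V] [FiniteDimensional K V]
    (p : K) (hp0 : p ≠ 0) (hp : ∀ m : ℕ, 1 ≤ m → p ^ m ≠ 1)
    (A N : Module.End K V) (hA : IsUnit A)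
    (h : N * A = p • (A * N)) : IsNilpotent N := by
  rcases subsingleton_or_nontrivial V with hV | hV
  · exact ⟨1, by ext x; exact Subsingleton.elim _ _⟩
  · -- the linear equivalence given by `A`
    let e : V ≃ₗ[K] V := LinearEquiv.ofBijective A ((Module.End.isUnit_iff A).mp hA)
    have key : (e.conjAlgEquiv K) (p • N) = N := by
      ext x
      have hx : A (e.symm x) = x := e.apply_symm_apply x
      have h2 : N (A (e.symm x)) = p • (A (N (e.symm x))) := by
        have := congrArg (fun f : Module.End K V => f (e.symm x)) h
        simpa using this
      have : (e.conjAlgEquiv K (p • N)) x = A ((p • N) (e.symm x)) := rfl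
      rw [this]
      simp only [LinearMap.smul_apply, map_smul]
      rw [← h2, hx]
    set q := minpoly K N with hqdef
    have hNint : IsIntegral K N := LinearMap.isIntegral N
    have hqmonic : q.Monic := minpoly.monic hNint
    have hmin : minpoly K (p • N) = q := by
      have := minpoly.algEquiv_eq (e.conjAlgEquiv K) (p • N)
      rw [key] at this
      exact this.symm
    -- `scaleRoots q p` annihilates `p • N`
    have hann : aeval (p • N) (q.scaleRoots p) = 0 := by
      have : (algebraMap K (Module.End K V) p) * N = p • N := by
        rw [Algebra.smul_def]
      rw [← this]
      exact scaleRoots_aeval_eq_zero (minpoly.aeval K N)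
    have hdvd : q ∣ q.scaleRoots p := by
      have := minpoly.dvd K (p • N) hann
      rwa [hmin] at this
    have heq : q = q.scaleRoots p := by
      apply Polynomial.eq_of_dvd_of_natDegree_le_of_leadingCoeff hdvd
      · rw [natDegree_scaleRoots]
      · rw [hqmonic.leadingCoeff, ((monic_scaleRoots_iff p).mpr hqmonic).leadingCoeff]
    set d := q.natDegree with hd
    have hcoeff : ∀ i, i < d → q.coeff i = 0 := by
      intro i hi
      have h1 : q.coeff i = q.coeff i * p ^ (d - i) := by
        conv_lhs => rw [heq]
        rw [coeff_scaleRoots]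
      have h2 : q.coeff i * (p ^ (d - i) - 1) = 0 := by
        rw [mul_sub, mul_one, ← h1, sub_self]
      rcases mul_eq_zero.mp h2 with h3 | h3
      · exact h3
      · exact absurd (sub_eq_zero.mp h3) (hp (d - i) (by omega))
    have hqX : q = X ^ d := by
      ext i
      rcases lt_trichotomy i d with hi | hi | hi
      · rw [hcoeff i hi, coeff_X_pow, if_neg hi.ne]
      · subst hi
        rw [coeff_X_pow, if_pos rfl]
        exact hqmonic
      · rw [coeff_eq_zero_of_natDegree_lt hi, coeff_X_pow, if_neg hi.ne']
    refine ⟨d, ?_⟩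
    have := minpoly.aeval K N
    rw [← hqdef, hqX] at this
    simpa using this
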